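/- Let α ∈ ℂ satisfy α² = 9Ω² - 4σ. Then: W((3Ω - α)·u + 2·z) = (1/2)·(-Ω + α)·((3Ω - α)·u + 2·z); W((3Ω + α)·u + 2·z) = (1/2)·(-Ω - α)·((3Ω + α)·u + 2·z); and every w ∈ V with B(u,w) = 0 and B(z,w) = 0 satisfies W(w) = Ω·w. (The eigenbivector statements of Proposition 7 of the paper: in a type I space-time with an umbilical structure the Weyl eigenbivectors associated with the eigenvalues (1/2)(-Ω ± α) are proportional to (3Ω ∓ α)𝒰 + 2𝒵, and the eigenbivector for Ω is orthogonal to both 𝒰 and 𝒵.) -/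
import Mathlib


open Module LinearMap

noncomputable section

/-- The endomorphism `W(x) := 3Ω·B(u,x)·u + Ω·x + B(u,x)·z + B(z,x)·u` of `V`,
representing the self-dual Weyl tensor `𝒲 = 3Ω·𝒰⊗𝒰 + Ω·𝒢 + 𝒰⊗̃𝒵` of a space-time
admitting a 2+2 umbilical structure acting on self-dual bivectors. -/
def Wmap {V : Type*} [AddCommGroup V] [Module ℂ V]
    (B : LinearMap.BilinForm ℂ V) (Ω : ℂ) (u z : V) : V →ₗ[ℂ] V :=
  (3 * Ω) • (B u).smulRight u + Ω • LinearMap.id + (B u).smulRight z + (B z).smulRight u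

end

/-- Proposition 7, eigenbivectors in the type I case: for `α` with
`α² = 9Ω² - 4σ`, the vectors `(3Ω ∓ α)u + 2z` are eigenvectors of `W` with eigenvalues
`(1/2)(-Ω ± α)`, and every `w` orthogonal to `u` and `z` satisfies `W(w) = Ω·w`. -/
theorem weyl_eigenvectors
    {V : Type*} [AddCommGroup V] [Module ℂ V] [FiniteDimensional ℂ V]
    (hdim : finrank ℂ V = 3)
    (B : LinearMap.BilinForm ℂ V) (hBsym : ∀ x y, B x y = B y x)
    (hBnd : B.Nondegenerate)
    (Ω : ℂ) (u z : V) (hu : B u u = -1) (huz : B u z = 0)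
    (α : ℂ) (hα : α ^ 2 = 9 * Ω ^ 2 - 4 * B z z) :
    Wmap B Ω u z ((3 * Ω - α) • u + (2 : ℂ) • z)
      = ((-Ω + α) / 2) • ((3 * Ω - α) • u + (2 : ℂ) • z) ∧
    Wmap B Ω u z ((3 * Ω + α) • u + (2 : ℂ) • z)
      = ((-Ω - α) / 2) • ((3 * Ω + α) • u + (2 : ℂ) • z) ∧
    (∀ w : V, B u w = 0 → B z w = 0 → Wmap B Ω u z w = Ω • w) := by
  have hzu : B z u = 0 := (hBsym z u).trans huz
  have hzz : B z z = (9 * Ω ^ 2 - α ^ 2) / 4 := by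
    linear_combination hα / 4
  refine ⟨?_, ?_, ?_⟩
  · simp only [Wmap, LinearMap.add_apply, LinearMap.smul_apply, LinearMap.id_apply,
      smulRight_apply, map_add, map_smul, hu, huz, hzu, hzz, smul_eq_mul]
    match_scalars <;> ring
  · simp only [Wmap, LinearMap.add_apply, LinearMap.smul_apply, LinearMap.id_apply,
      smulRight_apply, map_add, map_smul, hu, huz, hzu, hzz, smul_eq_mul]
    match_scalars <;> ring
  · intro w h1 h2
    simp [Wmap, h1, h2]
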